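/- Let F be a finite field, n ≥ 2, and let s ∈ GL_n(F) be an element of odd prime order whose characteristic polynomial is squarefree over F. Then the centralizer C_{GL_n(F)}(s) is not self-normalizing: N_{GL_n(F)}(C_{GL_n(F)}(s)) ≠ C_{GL_n(F)}(s). -/

import Mathlib

open Polynomial Matrix

namespace RSSAux

/-- A multiset of primes, whose product is squarefree, each dividing `f`:
the product divides `f`. -/
lemma multiset_prod_dvd {R : Type*} [CommRing R] [IsDomain R] [IsPrincipalIdealRing R]
    (S : Multiset R) (hp : ∀ π ∈ S, Prime π) (hsq : Squarefree S.prod)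
    {f : R} (hd : ∀ π ∈ S, π ∣ f) : S.prod ∣ f := by
  induction S using Multiset.induction with
  | empty => simpa using one_dvd f
  | cons π T ih =>
      rw [Multiset.prod_cons] at hsq ⊢
      have hπ : Prime π := hp π (Multiset.mem_cons_self π T)
      have hπT : ¬ π ∣ T.prod := by
        intro h
        exact hπ.not_unit (hsq π (mul_dvd_mul_left π h))
      have hT : T.prod ∣ f := by
        refine ih (fun x hx => hp x (Multiset.mem_cons_of_mem hx)) ?_
          (fun x hx => hd x (Multiset.mem_cons_of_mem hx))
        exact hsq.squarefree_of_dvd (dvd_mul_left _ _)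
      have hcop : IsCoprime π T.prod := (hπ.irreducible.coprime_iff_not_dvd).2 hπT
      exact hcop.mul_dvd (hd π (Multiset.mem_cons_self π T)) hT

/-- `aeval` applied to an eigenvector. -/
lemma aeval_mulVec_eigen {m : ℕ} {E : Type*} [Field E] (B : Matrix (Fin m) (Fin m) E)
    (w : Fin m → E) (r : E) (hw : B *ᵥ w = r • w) (f : E[X]) :
    (aeval B f) *ᵥ w = f.eval r • w := by
  have hpow : ∀ k : ℕ, (B ^ k) *ᵥ w = r ^ k • w := by
    intro k
    induction k with
    | zero => simp
    | succ k ihk =>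
        rw [pow_succ, ← Matrix.mulVec_mulVec, hw, Matrix.mulVec_smul, ihk, smul_smul,
          mul_comm, pow_succ]
  induction f using Polynomial.induction_on' with
  | add p q hp hq =>
      rw [map_add, Matrix.add_mulVec, hp, hq, eval_add, add_smul]
  | monomial k a =>
      rw [aeval_monomial, eval_monomial, ← Matrix.mulVec_mulVec, hpow,
        Matrix.mulVec_smul, Algebra.algebraMap_eq_smul_one, Matrix.smul_mulVec,
        Matrix.one_mulVec, smul_smul, mul_comm]

lemma eval_charpoly {m : Type*} [DecidableEq m] [Fintype m] {R : Type*} [CommRing R]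
    (B : Matrix m m R) (r : R) :
    B.charpoly.eval r = (Matrix.scalar m r - B).det := by
  rw [Matrix.charpoly, _root_.eval_det, matPolyEquiv_charmatrix]
  rw [eval_sub, eval_X, eval_C]

set_option synthInstance.maxHeartbeats 1000000 in
set_option maxHeartbeats 1000000 in
/-- For a matrix over a perfect field whose characteristic polynomial is squarefree,
the characteristic polynomial equals the minimal polynomial. -/
lemma charpoly_eq_minpoly {n : ℕ} (hn : 0 < n) {F : Type*} [Field F] [PerfectField F]
    (A : Matrix (Fin n) (Fin n) F) (hsq : Squarefree A.charpoly) :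
    A.charpoly = minpoly F A := by
  haveI : NeZero n := ⟨hn.ne'⟩
  have hint : IsIntegral F A := IsIntegral.of_finite F A
  set c := A.charpoly with hc
  have hmono : c.Monic := A.charpoly_monic
  have hmdvd : minpoly F A ∣ c := minpoly.dvd F A (A.aeval_self_charpoly)
  -- base change to the splitting field
  set E := c.SplittingField
  set φ := algebraMap F E
  set AE := A.map φ with hAE
  have hcE : AE.charpoly = c.map φ := Matrix.charpoly_map A φ
  have hsplits : (c.map φ).Splits :=
    Polynomial.SplittingField.splits c
  have hsep : c.Separable := (PerfectField.separable_iff_squarefree).2 hsq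
  have hsepE : (c.map φ).Separable := hsep.map
  have hroot : ∀ r ∈ (c.map φ).roots, ((minpoly F A).map φ).eval r = 0 := by
    intro r hr
    have hdet : (Matrix.scalar (Fin n) r - AE).det = 0 := by
      have := RSSAux.eval_charpoly AE r
      rw [hcE] at this
      rw [← this]
      exact (Polynomial.isRoot_of_mem_roots hr)
    obtain ⟨w, hw0, hw⟩ := (Matrix.exists_mulVec_eq_zero_iff).2 hdet
    have heig : AE *ᵥ w = r • w := by
      have h1 : (Matrix.scalar (Fin n) r - AE) *ᵥ w = 0 := hw
      rw [Matrix.sub_mulVec] at h1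
      have h2 : (Matrix.scalar (Fin n) r) *ᵥ w = r • w := by
        funext i
        rw [Matrix.scalar_apply, Matrix.mulVec_diagonal]
        rfl
      rw [h2] at h1
      rw [sub_eq_zero] at h1
      exact h1.symm ▸ rfl
    have hz : (aeval AE ((minpoly F A).map φ)) = 0 := by
      have h3 : AE = (AlgHom.mapMatrix (m := Fin n) (Algebra.ofId F E)) A := rfl
      rw [Polynomial.aeval_map_algebraMap, h3, Polynomial.aeval_algHom_apply,
        minpoly.aeval, map_zero]
    have h4 := RSSAux.aeval_mulVec_eigen AE w r heig ((minpoly F A).map φ)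
    rw [hz, Matrix.zero_mulVec] at h4
    rcases smul_eq_zero.1 h4.symm with h5 | h5
    · exact h5
    · exact absurd h5 hw0
  have hprodform : c.map φ = ((c.map φ).roots.map (fun a => X - C a)).prod :=
    hsplits.eq_prod_roots_of_monic (hmono.map φ)
  have hdvdE : c.map φ ∣ (minpoly F A).map φ := by
    rw [hprodform]
    refine RSSAux.multiset_prod_dvd _ ?_ ?_ ?_
    · intro π hπ
      obtain ⟨a, _, rfl⟩ := Multiset.mem_map.1 hπ
      exact Polynomial.prime_X_sub_C a
    · rw [← hprodform]; exact hsepE.squarefree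
    · intro π hπ
      obtain ⟨a, ha, rfl⟩ := Multiset.mem_map.1 hπ
      rw [Polynomial.dvd_iff_isRoot]
      exact hroot a ha
  have hcdvd : c ∣ minpoly F A := (Polynomial.map_dvd_map' φ).1 hdvdE
  exact (Polynomial.eq_of_monic_of_associated hmono (minpoly.monic hint)
    (associated_of_dvd_dvd hcdvd hmdvd))

/-- Existence of a cyclic vector when the characteristic polynomial is squarefree
and equal to the minimal polynomial. -/
lemma exists_cyclic {n : ℕ} (hn : 0 < n) {F : Type*} [Field F]
    (A : Matrix (Fin n) (Fin n) F) (hsq : Squarefree A.charpoly)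
    (hmin : A.charpoly = minpoly F A) :
    ∃ v : Fin n → F, ∀ f : F[X], (aeval A f) *ᵥ v = 0 ↔ A.charpoly ∣ f := by
  classical
  haveI : NeZero n := ⟨hn.ne'⟩
  set c := A.charpoly with hc
  have hmono : c.Monic := A.charpoly_monic
  have hc0 : c ≠ 0 := hmono.ne_zero
  set S := UniqueFactorizationMonoid.normalizedFactors c with hS
  have hnodup : S.Nodup :=
    (UniqueFactorizationMonoid.squarefree_iff_nodup_normalizedFactors hc0).1 hsq
  have hSprime : ∀ π ∈ S, Prime π := fun π hπ =>
    UniqueFactorizationMonoid.prime_of_normalized_factor π hπ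
  have hSmono : ∀ π ∈ S, Monic π := by
    intro π hπ
    have h1 := UniqueFactorizationMonoid.normalize_normalized_factor π hπ
    have h0 : π ≠ 0 := (hSprime π hπ).ne_zero
    rw [← h1]
    exact Polynomial.monic_normalize h0
  have hprod : S.prod = c := by
    refine Polynomial.eq_of_monic_of_associated ?_ hmono
      (UniqueFactorizationMonoid.prod_normalizedFactors hc0)
    have h2 := Polynomial.monic_multiset_prod_of_monic S _root_.id hSmono
    rwa [Multiset.map_id] at h2
  -- complement polynomials
  set u : F[X] → F[X] := fun π => (S.erase π).prod with hu
  have hπu : ∀ π ∈ S, π * u π = c := by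
    intro π hπ
    rw [hu, ← hprod]
    exact Multiset.prod_erase hπ
  have hund : ∀ π ∈ S, ¬ π ∣ u π := by
    intro π hπ hdvd
    exact (hSprime π hπ).not_unit (hsq π (by
      rw [← hπu π hπ]
      exact mul_dvd_mul_left π hdvd))
  have hu0 : ∀ π ∈ S, u π ≠ 0 := by
    intro π hπ h0
    apply hc0
    rw [← hπu π hπ, h0, mul_zero]
  have hune : ∀ π ∈ S, aeval A (u π) ≠ 0 := by
    intro π hπ h0
    have hdvd : c ∣ u π := hmin ▸ minpoly.dvd F A h0
    have hle := Polynomial.natDegree_le_of_dvd hdvd (hu0 π hπ)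
    have hπ0 : π ≠ 0 := (hSprime π hπ).ne_zero
    have hdegs : c.natDegree = π.natDegree + (u π).natDegree := by
      rw [← hπu π hπ]
      exact Polynomial.natDegree_mul hπ0 (hu0 π hπ)
    have hπdeg : 0 < π.natDegree := (hSprime π hπ).irreducible.natDegree_pos
    omega
  have hvecne : ∀ (M : Matrix (Fin n) (Fin n) F), M ≠ 0 → ∃ x, M *ᵥ x ≠ 0 := by
    intro M hM
    by_contra h
    push_neg at h
    apply hM
    ext i j
    have h2 := congrFun (h (Pi.single j 1)) i
    rw [Matrix.mulVec_single] at h2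
    simpa using h2
  -- choose witness vectors
  set vv : F[X] → (Fin n → F) := fun π =>
    if h : ∃ x, (aeval A (u π)) *ᵥ x ≠ 0 then (aeval A (u π)) *ᵥ h.choose else 0 with hvv
  have hvvne : ∀ π ∈ S, vv π ≠ 0 := by
    intro π hπ
    have hex : ∃ x, (aeval A (u π)) *ᵥ x ≠ 0 := hvecne _ (hune π hπ)
    rw [hvv]
    simp only [dif_pos hex]
    exact hex.choose_spec
  have hkey : ∀ π ∈ S, ∀ f : F[X], (aeval A f) *ᵥ vv π = 0 ↔ π ∣ f := by
    intro π hπ f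
    have hex : ∃ x, (aeval A (u π)) *ᵥ x ≠ 0 := hvecne _ (hune π hπ)
    have hvvπ : vv π = (aeval A (u π)) *ᵥ hex.choose := by rw [hvv]; simp only [dif_pos hex]
    constructor
    · intro h0
      by_contra hnd
      have hcop : IsCoprime π f := ((hSprime π hπ).irreducible.coprime_iff_not_dvd).2 hnd
      obtain ⟨a, b, hab⟩ := hcop
      have h1 : (aeval A (a * π)) *ᵥ vv π = 0 := by
        rw [hvvπ, Matrix.mulVec_mulVec, ← _root_.map_mul]
        have : a * π * u π = a * c := by rw [mul_assoc, hπu π hπ]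
        rw [this, _root_.map_mul, hc, Matrix.aeval_self_charpoly, mul_zero, Matrix.zero_mulVec]
      have h2 : (aeval A (b * f)) *ᵥ vv π = 0 := by
        rw [_root_.map_mul, ← Matrix.mulVec_mulVec, h0, Matrix.mulVec_zero]
      have h3 : vv π = 0 := by
        have h4 : (aeval A (a * π + b * f)) *ᵥ vv π = vv π := by
          rw [hab, _root_.map_one, Matrix.one_mulVec]
        rw [_root_.map_add, Matrix.add_mulVec, h1, h2, add_zero] at h4
        exact h4.symm
      exact hvvne π hπ h3
    · rintro ⟨h, rfl⟩
      rw [hvvπ, Matrix.mulVec_mulVec, ← _root_.map_mul]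
      have : π * h * u π = h * c := by rw [← hπu π hπ]; ring
      rw [this, _root_.map_mul, hc, Matrix.aeval_self_charpoly, mul_zero, Matrix.zero_mulVec]
  -- the cyclic vector
  refine ⟨(S.map vv).sum, fun f => ?_⟩
  have hsum : ∀ g : F[X], (aeval A g) *ᵥ (S.map vv).sum
      = (S.map (fun π => (aeval A g) *ᵥ vv π)).sum := by
    intro g
    have := map_multiset_sum ((aeval A g).mulVecLin) (S.map vv)
    simpa [Matrix.mulVecLin_apply, Multiset.map_map, Function.comp_def] using this
  constructor
  · intro h0
    have hdvdall : ∀ π ∈ S, π ∣ f := by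
      intro π hπ
      have h1 : (aeval A (u π * f)) *ᵥ (S.map vv).sum = 0 := by
        rw [_root_.map_mul, ← Matrix.mulVec_mulVec, h0, Matrix.mulVec_zero]
      rw [hsum] at h1
      have hsplit : S = π ::ₘ S.erase π := (Multiset.cons_erase hπ).symm
      rw [hsplit, Multiset.map_cons, Multiset.sum_cons] at h1
      have hrest : (Multiset.map (fun π' => (aeval A (u π * f)) *ᵥ vv π') (S.erase π)).sum = 0 := by
        apply Multiset.sum_eq_zero
        intro x hx
        obtain ⟨π', hπ', rfl⟩ := Multiset.mem_map.1 hx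
        have hπ'S : π' ∈ S := Multiset.mem_of_mem_erase hπ'
        refine (hkey π' hπ'S _).2 ?_
        exact dvd_mul_of_dvd_left (Multiset.dvd_prod hπ') f
      rw [hrest, add_zero] at h1
      have hπdvd : π ∣ u π * f := (hkey π hπ _).1 h1
      exact ((hSprime π hπ).dvd_mul.1 hπdvd).resolve_left (hund π hπ)
    have hfin := RSSAux.multiset_prod_dvd S hSprime (by rw [hprod]; exact hsq) hdvdall
    rw [hprod] at hfin
    exact hfin
  · rintro ⟨h, rfl⟩
    rw [_root_.map_mul, hc, Matrix.aeval_self_charpoly, zero_mul, Matrix.zero_mulVec]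

set_option maxHeartbeats 1000000 in
/-- Given a cyclic vector and a polynomial `w` mapping the roots of the (squarefree)
characteristic polynomial into themselves (with compositional inverse `w'` mod `c`),
there is an invertible matrix `G` with `G * A = w(A) * G`. -/
lemma exists_conjugator {n : ℕ} (hn : 0 < n) {F : Type*} [Field F]
    (A : Matrix (Fin n) (Fin n) F)
    (v : Fin n → F) (hv : ∀ f : F[X], (aeval A f) *ᵥ v = 0 ↔ A.charpoly ∣ f)
    (w w' : F[X]) (hw : A.charpoly ∣ A.charpoly.comp w)
    (hw' : A.charpoly ∣ w'.comp w - X) :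
    ∃ G : (Matrix (Fin n) (Fin n) F)ˣ,
      ((G : Matrix (Fin n) (Fin n) F) * A = aeval A w * (G : Matrix (Fin n) (Fin n) F)) ∧
      ∀ f : F[X], (G : Matrix (Fin n) (Fin n) F) *ᵥ ((aeval A f) *ᵥ v)
        = (aeval A (f.comp w)) *ᵥ v := by
  classical
  haveI : NeZero n := ⟨hn.ne'⟩
  set c := A.charpoly with hc
  have hmono : c.Monic := A.charpoly_monic
  have hc0 : c ≠ 0 := hmono.ne_zero
  have hdeg : c.natDegree = n := by
    rw [hc, A.charpoly_natDegree_eq_dim, Fintype.card_fin]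
  set Φ : F[X] →ₗ[F] (Fin n → F) :=
    { toFun := fun f => (aeval A f) *ᵥ v
      map_add' := fun f g => by
        show (aeval A (f + g)) *ᵥ v = (aeval A f) *ᵥ v + (aeval A g) *ᵥ v
        rw [_root_.map_add, Matrix.add_mulVec]
      map_smul' := fun a f => by
        show (aeval A (a • f)) *ᵥ v = a • ((aeval A f) *ᵥ v)
        rw [_root_.map_smul, Matrix.smul_mulVec] } with hΦdef
  have hΦapp : ∀ f : F[X], Φ f = (aeval A f) *ᵥ v := fun f => rfl
  have hΦ0 : ∀ f : F[X], c ∣ f → Φ f = 0 := fun f hf => (hv f).2 hf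
  have hΦcong : ∀ f g : F[X], c ∣ f - g → Φ f = Φ g := by
    intro f g hfg
    have h1 := hΦ0 _ hfg
    rw [map_sub] at h1
    exact sub_eq_zero.1 h1
  have hcomp_cong : ∀ (f a b : F[X]), c ∣ a - b → c ∣ f.comp a - f.comp b := by
    intro f a b hab
    induction f using Polynomial.induction_on' with
    | add p q hp hq =>
        rw [Polynomial.add_comp, Polynomial.add_comp]
        have h2 : p.comp a + q.comp a - (p.comp b + q.comp b)
            = (p.comp a - p.comp b) + (q.comp a - q.comp b) := by ring
        rw [h2]
        exact dvd_add hp hq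
    | monomial k t =>
        rw [Polynomial.monomial_comp, Polynomial.monomial_comp]
        have h1 : a - b ∣ a ^ k - b ^ k := sub_dvd_pow_sub_pow a b k
        have h2 : C t * a ^ k - C t * b ^ k = C t * (a ^ k - b ^ k) := by ring
        rw [h2]
        exact Dvd.dvd.mul_left (dvd_trans hab h1) (C t)
  -- linear independence of (Φ (X^i))
  set b : Fin n → (Fin n → F) := fun i => Φ (X ^ (i : ℕ)) with hb
  have hli : LinearIndependent F b := by
    rw [Fintype.linearIndependent_iff]
    intro a ha
    set f : F[X] := ∑ i : Fin n, a i • X ^ (i : ℕ) with hf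
    have hΦf : Φ f = 0 := by
      rw [hf, map_sum]
      have h9 : ∀ i : Fin n, Φ (a i • X ^ (i : ℕ)) = a i • b i := fun i => by
        rw [LinearMap.map_smul]
      rw [Finset.sum_congr rfl fun i _ => h9 i]
      exact ha
    have hdvd : c ∣ f := (hv f).1 hΦf
    have hfdeg : f.degree < (n : WithBot ℕ) := by
      rw [hf]
      refine lt_of_le_of_lt (Polynomial.degree_sum_le _ _) ?_
      rw [Finset.sup_lt_iff (by exact WithBot.bot_lt_coe n)]
      intro i _
      refine lt_of_le_of_lt (Polynomial.degree_smul_le _ _) ?_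
      rw [Polynomial.degree_X_pow]
      exact_mod_cast i.isLt
    have hf0 : f = 0 := by
      by_contra hne
      have h1 := Polynomial.degree_le_of_dvd hdvd hne
      rw [Polynomial.degree_eq_natDegree hc0, hdeg] at h1
      exact absurd (lt_of_le_of_lt h1 hfdeg) (lt_irrefl _)
    intro i
    have hcoeff : f.coeff (i : ℕ) = a i := by
      rw [hf, Polynomial.finset_sum_coeff]
      have hterm : ∀ j : Fin n, (a j • (X : F[X]) ^ (j : ℕ)).coeff (i : ℕ)
          = if j = i then a i else 0 := by
        intro j
        rw [Polynomial.coeff_smul, Polynomial.coeff_X_pow]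
        by_cases h : j = i
        · subst h; simp
        · have h8 : ¬ ((i : ℕ) = (j : ℕ)) := fun hh => h (Fin.ext hh.symm)
          simp [h8, h]
      rw [Finset.sum_congr rfl fun j _ => hterm j,
        Finset.sum_ite_eq' Finset.univ i (fun _ => a i)]
      simp
    rw [hf0, Polynomial.coeff_zero] at hcoeff
    exact hcoeff.symm
  have hcard : Fintype.card (Fin n) = Module.finrank F (Fin n → F) := by
    simp [Module.finrank_fintype_fun_eq_card]
  set Bas : Module.Basis (Fin n) F (Fin n → F) := basisOfLinearIndependentOfCardEqFinrank hli hcard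
    with hBasdef
  have hBas : ∀ i, Bas i = b i := by
    intro i
    rw [hBasdef, coe_basisOfLinearIndependentOfCardEqFinrank]
  have hΦsurj : ∀ x : Fin n → F, ∃ f, Φ f = x := by
    intro x
    refine ⟨∑ i : Fin n, (Bas.repr x i) • X ^ (i : ℕ), ?_⟩
    rw [map_sum]
    have h1 : ∀ i : Fin n, Bas.repr x i • Φ (X ^ (i : ℕ)) = Bas.repr x i • Bas i := by
      intro i; rw [hBas i]
    calc ∑ i, Φ (Bas.repr x i • X ^ (i : ℕ))
        = ∑ i, Bas.repr x i • Bas i := by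
          refine Finset.sum_congr rfl fun i _ => ?_
          rw [LinearMap.map_smul, h1 i]
      _ = x := Bas.sum_repr x
  -- the semilinear-type map g
  set g : (Fin n → F) →ₗ[F] (Fin n → F) := Bas.constr F (fun i => Φ (w ^ (i : ℕ))) with hg
  have hgb : ∀ i : Fin n, g (b i) = Φ (w ^ (i : ℕ)) := by
    intro i
    rw [hg, ← hBas i]
    exact Bas.constr_basis F _ i
  have hgΦ : ∀ f : F[X], g (Φ f) = Φ (f.comp w) := by
    have hlow : ∀ p : F[X], p.natDegree < n → g (Φ p) = Φ (p.comp w) := by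
      intro p hp
      have hps : p = ∑ i ∈ Finset.range n, Polynomial.monomial i (p.coeff i) :=
        Polynomial.as_sum_range' p n hp
      have h1 : Φ p = ∑ i ∈ Finset.range n, p.coeff i • Φ (X ^ i) := by
        conv_lhs => rw [hps]
        rw [map_sum]
        refine Finset.sum_congr rfl fun i _ => ?_
        rw [← Polynomial.smul_X_eq_monomial, LinearMap.map_smul]
      have h2 : p.comp w = ∑ i ∈ Finset.range n, p.coeff i • w ^ i := by
        conv_lhs => rw [hps]
        rw [Polynomial.comp_eq_aeval, map_sum]
        refine Finset.sum_congr rfl fun i _ => ?_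
        rw [Polynomial.aeval_monomial, ← Algebra.smul_def]
      rw [h1, map_sum, h2, map_sum]
      refine Finset.sum_congr rfl fun i hi => ?_
      rw [LinearMap.map_smul, LinearMap.map_smul]
      congr 1
      have hi' : i < n := Finset.mem_range.1 hi
      have h3 := hgb ⟨i, hi'⟩
      simpa using h3
    intro f
    have hdm : f %ₘ c + c * (f /ₘ c) = f := Polynomial.modByMonic_add_div f c
    set r := f %ₘ c with hr
    set t := f /ₘ c with ht
    have hring : f = c * t + r := by rw [← hdm]; ring
    have h3 : Φ f = Φ r := by
      conv_lhs => rw [hring]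
      rw [map_add, hΦ0 (c * t) (dvd_mul_right c t), zero_add]
    have h4 : Φ (f.comp w) = Φ (r.comp w) := by
      have h5 : f.comp w = (c.comp w) * (t.comp w) + r.comp w := by
        conv_lhs => rw [hring]
        rw [Polynomial.add_comp, Polynomial.mul_comp]
      rw [h5, map_add, hΦ0 _ (dvd_mul_of_dvd_left hw (t.comp w)), zero_add]
    have h6 : r.natDegree < n := by
      rcases eq_or_ne r 0 with h | h
      · rw [h]; simpa using hn
      · have h7 : r.degree < c.degree := Polynomial.degree_modByMonic_lt f hmono
        rw [Polynomial.degree_eq_natDegree hc0, hdeg] at h7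
        rw [Polynomial.degree_eq_natDegree h] at h7
        exact_mod_cast h7
    rw [h3, h4]
    exact hlow r h6
  have hgsurj : Function.Surjective g := by
    intro x
    obtain ⟨f, hf⟩ := hΦsurj x
    refine ⟨Φ (f.comp w'), ?_⟩
    calc g (Φ (f.comp w')) = Φ ((f.comp w').comp w) := hgΦ _
      _ = Φ (f.comp (w'.comp w)) := by rw [Polynomial.comp_assoc]
      _ = Φ (f.comp X) := hΦcong _ _ (hcomp_cong f _ _ hw')
      _ = Φ f := by rw [Polynomial.comp_X]
      _ = x := hf
  have hgbij : Function.Bijective g :=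
    ⟨(LinearMap.injective_iff_surjective).2 hgsurj, hgsurj⟩
  set e := LinearEquiv.ofBijective g hgbij with he
  have hesymm : g.comp (e.symm : (Fin n → F) →ₗ[F] (Fin n → F)) = LinearMap.id := by
    apply LinearMap.ext
    intro x
    have h1 : g (e.symm x) = e (e.symm x) := rfl
    simp [h1]
  have hesymm2 : ((e.symm : (Fin n → F) →ₗ[F] (Fin n → F)).comp g) = LinearMap.id := by
    apply LinearMap.ext
    intro x
    have h1 : g x = e x := rfl
    simp [h1]
  set G : (Matrix (Fin n) (Fin n) F)ˣ :=
    { val := LinearMap.toMatrix' (g : (Fin n → F) →ₗ[F] (Fin n → F))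
      inv := LinearMap.toMatrix' ((e.symm : (Fin n → F) →ₗ[F] (Fin n → F)))
      val_inv := by rw [← LinearMap.toMatrix'_comp, hesymm, LinearMap.toMatrix'_id]
      inv_val := by rw [← LinearMap.toMatrix'_comp, hesymm2, LinearMap.toMatrix'_id] }
    with hGdef
  have hGv : ∀ x, (G : Matrix (Fin n) (Fin n) F) *ᵥ x = g x := by
    intro x
    have h1 : Matrix.toLin' (LinearMap.toMatrix' g) = g := Matrix.toLin'_toMatrix' g
    calc (G : Matrix (Fin n) (Fin n) F) *ᵥ x
        = Matrix.toLin' (LinearMap.toMatrix' g) x := (Matrix.toLin'_apply _ _).symm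
      _ = g x := by rw [h1]
  refine ⟨G, ?_, ?_⟩
  · apply Matrix.toLin'.injective
    apply LinearMap.ext
    intro x
    rw [Matrix.toLin'_apply, Matrix.toLin'_apply]
    obtain ⟨f, hf⟩ := hΦsurj x
    rw [← hf]
    rw [← Matrix.mulVec_mulVec, ← Matrix.mulVec_mulVec]
    have h1 : A *ᵥ (Φ f) = Φ (X * f) := by
      show A *ᵥ ((aeval A f) *ᵥ v) = (aeval A (X * f)) *ᵥ v
      rw [Matrix.mulVec_mulVec, _root_.map_mul, Polynomial.aeval_X]
    rw [h1, hGv, hGv, hgΦ, hgΦ]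
    show Φ ((X * f).comp w) = aeval A w *ᵥ ((aeval A (f.comp w)) *ᵥ v)
    rw [Matrix.mulVec_mulVec, ← _root_.map_mul, Polynomial.mul_comp, Polynomial.X_comp]
    rfl
  · intro f
    have h1 := hgΦ f
    rw [← hGv] at h1
    exact h1

lemma commute_aeval {n : ℕ} {F : Type*} [Field F] {H A : Matrix (Fin n) (Fin n) F}
    (h : Commute H A) (f : F[X]) : Commute H (aeval A f) := by
  induction f using Polynomial.induction_on' with
  | add p q hp hq => rw [_root_.map_add]; exact hp.add_right hq
  | monomial k t =>
      rw [Polynomial.aeval_monomial]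
      exact Commute.mul_right (Algebra.commutes t H).symm (h.pow_right k)

lemma conj_aeval {n : ℕ} {F : Type*} [Field F] (G : (Matrix (Fin n) (Fin n) F)ˣ)
    (M : Matrix (Fin n) (Fin n) F) (f : F[X]) :
    (G : Matrix (Fin n) (Fin n) F) * aeval M f
        * ((G⁻¹ : (Matrix (Fin n) (Fin n) F)ˣ) : Matrix (Fin n) (Fin n) F)
      = aeval ((G : Matrix (Fin n) (Fin n) F) * M
        * ((G⁻¹ : (Matrix (Fin n) (Fin n) F)ˣ) : Matrix (Fin n) (Fin n) F)) f := by
  set Gm : Matrix (Fin n) (Fin n) F := (G : Matrix (Fin n) (Fin n) F) with hGm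
  set Gi : Matrix (Fin n) (Fin n) F := ((G⁻¹ : (Matrix (Fin n) (Fin n) F)ˣ) : Matrix (Fin n) (Fin n) F) with hGi
  have h1 : Gm * Gi = 1 := by rw [hGm, hGi, ← Units.val_mul, mul_inv_cancel G, Units.val_one]
  have h2 : Gi * Gm = 1 := by rw [hGm, hGi, ← Units.val_mul, inv_mul_cancel G, Units.val_one]
  have hpow : ∀ k : ℕ, (Gm * M * Gi) ^ k = Gm * M ^ k * Gi := by
    intro k
    induction k with
    | zero => rw [pow_zero, pow_zero, mul_one, h1]
    | succ k ih =>
        rw [pow_succ, ih, pow_succ]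
        calc Gm * M ^ k * Gi * (Gm * M * Gi)
            = Gm * M ^ k * (Gi * Gm) * M * Gi := by simp only [Matrix.mul_assoc]
          _ = Gm * (M ^ k * M) * Gi := by rw [h2]; simp only [Matrix.mul_assoc, Matrix.one_mul]
  induction f using Polynomial.induction_on' with
  | add p q hp hq =>
      rw [_root_.map_add, _root_.map_add, mul_add, add_mul, hp, hq]
  | monomial k t =>
      rw [Polynomial.aeval_monomial, Polynomial.aeval_monomial, hpow]
      rw [← Matrix.mul_assoc, ← (Algebra.commutes t Gm)]
      simp only [Matrix.mul_assoc]

lemma mem_normalizer_of_conj {n : ℕ} {F : Type} [Field F] [Fintype F]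
    (s γ : Matrix.GeneralLinearGroup (Fin n) F) (w₁ w₂ : F[X])
    (h₁ : (γ : Matrix (Fin n) (Fin n) F) * (s : Matrix (Fin n) (Fin n) F)
      = aeval (s : Matrix (Fin n) (Fin n) F) w₁ * (γ : Matrix (Fin n) (Fin n) F))
    (h₂ : (s : Matrix (Fin n) (Fin n) F) * (γ : Matrix (Fin n) (Fin n) F)
      = (γ : Matrix (Fin n) (Fin n) F) * aeval (s : Matrix (Fin n) (Fin n) F) w₂) :
    γ ∈ Subgroup.normalizer (Subgroup.centralizer {s} : Set (Matrix.GeneralLinearGroup (Fin n) F)) := by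
  rw [Subgroup.mem_normalizer_iff]
  intro h
  rw [Subgroup.mem_centralizer_singleton_iff, Subgroup.mem_centralizer_singleton_iff]
  have ht₁ : ((γ * s * γ⁻¹ : Matrix.GeneralLinearGroup (Fin n) F) : Matrix (Fin n) (Fin n) F)
      = aeval (s : Matrix (Fin n) (Fin n) F) w₁ := by
    rw [Units.val_mul, Units.val_mul, h₁, mul_assoc, Units.mul_inv, mul_one]
  have ht₂ : ((γ⁻¹ * s * γ : Matrix.GeneralLinearGroup (Fin n) F) : Matrix (Fin n) (Fin n) F)
      = aeval (s : Matrix (Fin n) (Fin n) F) w₂ := by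
    rw [Units.val_mul, Units.val_mul, mul_assoc, h₂, ← mul_assoc, Units.inv_mul, one_mul]
  have hcu : ∀ a b : Matrix.GeneralLinearGroup (Fin n) F,
      Commute ((a : Matrix (Fin n) (Fin n) F)) (b : Matrix (Fin n) (Fin n) F) → Commute a b := by
    intro a b hab
    have : a * b = b * a := Units.ext (by rw [Units.val_mul, Units.val_mul]; exact hab)
    exact this
  have hcu' : ∀ a b : Matrix.GeneralLinearGroup (Fin n) F, Commute a b →
      Commute ((a : Matrix (Fin n) (Fin n) F)) (b : Matrix (Fin n) (Fin n) F) := by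
    intro a b hab
    have := congrArg Units.val hab
    rw [Units.val_mul, Units.val_mul] at this
    exact this
  constructor
  · intro hcm
    have hc1 : Commute h s := hcm
    have hc2 : Commute ((h : Matrix (Fin n) (Fin n) F)) (aeval (s : Matrix (Fin n) (Fin n) F) w₂) :=
      commute_aeval (hcu' h s hc1) w₂
    rw [← ht₂] at hc2
    have hc3 : Commute h (γ⁻¹ * s * γ) := hcu _ _ hc2
    have hc4 := hc3.map (MulAut.conj γ).toMonoidHom
    simp only [MulAut.conj_apply, MulEquiv.coe_toMonoidHom] at hc4
    have h5 : γ * (γ⁻¹ * s * γ) * γ⁻¹ = s := by group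
    rw [h5] at hc4
    exact hc4
  · intro hcm
    have hc1 : Commute (γ * h * γ⁻¹) s := hcm
    have hc2 : Commute (((γ * h * γ⁻¹ : Matrix.GeneralLinearGroup (Fin n) F) : Matrix (Fin n) (Fin n) F))
        (aeval (s : Matrix (Fin n) (Fin n) F) w₁) := commute_aeval (hcu' _ s hc1) w₁
    rw [← ht₁] at hc2
    have hc3 : Commute (γ * h * γ⁻¹) (γ * s * γ⁻¹) := hcu _ _ hc2
    have hc4 := hc3.map (MulAut.conj γ⁻¹).toMonoidHom
    simp only [MulAut.conj_apply, MulEquiv.coe_toMonoidHom] at hc4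
    have h5 : γ⁻¹ * (γ * h * γ⁻¹) * γ⁻¹⁻¹ = h := by group
    have h6 : γ⁻¹ * (γ * s * γ⁻¹) * γ⁻¹⁻¹ = s := by group
    rw [h5, h6] at hc4
    exact hc4

end RSSAux

/-- The centralizer of a regular semisimple element of odd prime order in `GL_n(F)`
is not self-normalizing. -/
theorem centralizer_regular_semisimple_not_self_normalizing
    (F : Type) [Field F] [Fintype F] (n : ℕ) (hn : 2 ≤ n)
    (s : Matrix.GeneralLinearGroup (Fin n) F)
    (hprime : (orderOf s).Prime) (hodd : Odd (orderOf s))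
    (hsq : Squarefree (Matrix.charpoly ((s : Matrix (Fin n) (Fin n) F)))) :
    Subgroup.normalizer (Subgroup.centralizer {s} : Set (Matrix.GeneralLinearGroup (Fin n) F)) ≠ Subgroup.centralizer {s} := by
  classical
  intro heq
  set A : Matrix (Fin n) (Fin n) F := (s : Matrix (Fin n) (Fin n) F) with hA
  have hn0 : 0 < n := lt_of_lt_of_le (by norm_num) hn
  haveI : NeZero n := ⟨hn0.ne'⟩
  set c : F[X] := A.charpoly with hc
  have hmono : c.Monic := A.charpoly_monic
  have hc0 : c ≠ 0 := hmono.ne_zero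
  have hdeg : c.natDegree = n := by rw [hc, A.charpoly_natDegree_eq_dim, Fintype.card_fin]
  have hmin : c = minpoly F A := RSSAux.charpoly_eq_minpoly hn0 A hsq
  obtain ⟨v, hv⟩ := RSSAux.exists_cyclic hn0 A hsq hmin
  set q := Fintype.card F with hq
  have hq1 : 1 < q := Fintype.one_lt_card
  by_cases hsplit : A ^ q = A
  · -- split case
    have hdvdqx : c ∣ (X : F[X]) ^ q - X := by
      rw [hmin]
      apply minpoly.dvd
      rw [map_sub, map_pow, Polynomial.aeval_X]
      rw [hsplit, sub_self]
    have hXqX0 : ((X : F[X]) ^ q - X) ≠ 0 := FiniteField.X_pow_card_sub_X_ne_zero F hq1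
    have hsplitsbig : ((X : F[X]) ^ q - X).Splits := by
      rw [Polynomial.splits_iff_card_roots, FiniteField.roots_X_pow_card_sub_X F,
        FiniteField.X_pow_card_sub_X_natDegree_eq F hq1]
      simp [hq]
    have hcsplits : c.Splits :=
      hsplitsbig.of_dvd hXqX0 hdvdqx
    have hsep : c.Separable := (PerfectField.separable_iff_squarefree).2 hsq
    have hnodup : c.roots.Nodup := Polynomial.nodup_roots hsep
    have hcardroots : c.roots.card = n := by
      rw [(Polynomial.splits_iff_card_roots).1 hcsplits]
      exact hdeg
    set T := c.roots.toFinset with hT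
    have hTval : T.val = c.roots := Multiset.dedup_eq_self.2 hnodup
    have hcardT : T.card = n := by
      have : T.card = T.val.card := rfl
      rw [this, hTval, hcardroots]
    have h2le : 1 < T.card := by omega
    obtain ⟨l₁, hl1, l₂, hl2, hne⟩ := Finset.one_lt_card.1 h2le
    set σ : F → F := fun x => Equiv.swap l₁ l₂ x with hσ
    have hσl₁ : σ l₁ = l₂ := by rw [hσ]; simp
    have hσl₂ : σ l₂ = l₁ := by rw [hσ]; simp
    have hσT : ∀ μ ∈ T, σ μ ∈ T := by
      intro μ hμ
      rcases eq_or_ne μ l₁ with h | h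
      · subst h; rw [hσl₁]; exact hl2
      rcases eq_or_ne μ l₂ with h2 | h2
      · subst h2; rw [hσl₂]; exact hl1
      · have h3 : σ μ = μ := by
          simp only [hσ]
          exact Equiv.swap_apply_of_ne_of_ne h h2
        rw [h3]; exact hμ
    have hσσ : ∀ x, σ (σ x) = x := fun x => Equiv.swap_apply_self _ _ x
    set u : F[X] := Lagrange.interpolate T _root_.id σ with hudef
    have hueval : ∀ μ ∈ T, u.eval μ = σ μ := by
      intro μ hμ
      have h3 := Lagrange.eval_interpolate_at_node (s := T) (v := _root_.id) (r := σ)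
        (Set.injOn_id _) hμ
      simpa [hudef] using h3
    have hcprod : c = ∏ μ ∈ T, (X - C μ) := by
      have h1 : c = (c.roots.map (fun a => X - C a)).prod :=
        hcsplits.eq_prod_roots_of_monic hmono
      rw [h1, Finset.prod_eq_multiset_prod, hTval]
    have hdvd_of_roots : ∀ f : F[X], (∀ μ ∈ T, f.eval μ = 0) → c ∣ f := by
      intro f hf
      rw [hcprod]
      refine Finset.prod_dvd_of_coprime ?_ ?_
      · exact (Polynomial.pairwise_coprime_X_sub_C Function.injective_id).set_pairwise _
      · intro μ hμ
        rw [Polynomial.dvd_iff_isRoot]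
        exact hf μ hμ
    have hroots_eval : ∀ μ ∈ T, c.eval μ = 0 := by
      intro μ hμ
      exact Polynomial.isRoot_of_mem_roots (Multiset.mem_toFinset.1 hμ)
    have hcu : c ∣ c.comp u := by
      apply hdvd_of_roots
      intro μ hμ
      rw [Polynomial.eval_comp, hueval μ hμ]
      exact hroots_eval _ (hσT μ hμ)
    have huu : c ∣ u.comp u - X := by
      apply hdvd_of_roots
      intro μ hμ
      rw [Polynomial.eval_sub, Polynomial.eval_comp, Polynomial.eval_X, hueval μ hμ,
        hueval _ (hσT μ hμ), hσσ, sub_self]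
    obtain ⟨G, hG1, hG2⟩ := RSSAux.exists_conjugator hn0 A v hv u u hcu huu
    have huuA : aeval A (u.comp u) = A := by
      obtain ⟨d, hd⟩ := huu
      have h3 : u.comp u = X + c * d := by rw [← hd]; ring
      rw [h3, _root_.map_add, _root_.map_mul, hc, Matrix.aeval_self_charpoly, zero_mul,
        add_zero, Polynomial.aeval_X]
    have hA2 : A * (G : Matrix (Fin n) (Fin n) F) = (G : Matrix (Fin n) (Fin n) F) * aeval A u := by
      have h4 := RSSAux.conj_aeval G A u
      have h5 : (G : Matrix (Fin n) (Fin n) F) * A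
          * ((G⁻¹ : (Matrix (Fin n) (Fin n) F)ˣ) : Matrix (Fin n) (Fin n) F) = aeval A u := by
        rw [hG1, mul_assoc, ← Units.val_mul, mul_inv_cancel G, Units.val_one, mul_one]
      rw [h5] at h4
      have h6 : aeval (aeval A u) u = A := by rw [← Polynomial.aeval_comp]; exact huuA
      rw [h6] at h4
      calc A * (G : Matrix (Fin n) (Fin n) F)
          = ((G : Matrix (Fin n) (Fin n) F) * aeval A u
              * ((G⁻¹ : (Matrix (Fin n) (Fin n) F)ˣ) : Matrix (Fin n) (Fin n) F))
            * (G : Matrix (Fin n) (Fin n) F) := by rw [h4]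
        _ = (G : Matrix (Fin n) (Fin n) F) * aeval A u
              * (((G⁻¹ : (Matrix (Fin n) (Fin n) F)ˣ) : Matrix (Fin n) (Fin n) F)
                * (G : Matrix (Fin n) (Fin n) F)) := by simp only [Matrix.mul_assoc]
        _ = (G : Matrix (Fin n) (Fin n) F) * aeval A u := by
              rw [← Units.val_mul, inv_mul_cancel G, Units.val_one, mul_one]
    have hmem := RSSAux.mem_normalizer_of_conj s G u u hG1 hA2
    -- non-commuting part
    set p₁ : F[X] := ∏ μ ∈ T.erase l₁, (X - C μ) with hp₁
    have hp₁c : (X - C l₁) * p₁ = c := by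
      rw [hp₁, hcprod]
      exact Finset.mul_prod_erase T (fun μ => X - C μ) hl1
    have hΦp₁ne : (aeval A p₁) *ᵥ v ≠ 0 := by
      intro h0
      have hdvd := (hv p₁).1 h0
      have hp₁0 : p₁ ≠ 0 := by
        apply Polynomial.Monic.ne_zero
        exact Polynomial.monic_prod_of_monic _ _ (fun μ _ => Polynomial.monic_X_sub_C μ)
      have h1 := Polynomial.natDegree_le_of_dvd hdvd hp₁0
      rw [← hc] at h1
      have h2 : p₁.natDegree = n - 1 := by
        rw [hp₁, Polynomial.natDegree_prod _ _ (fun μ _ => Polynomial.X_sub_C_ne_zero μ)]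
        have h3 : ∀ μ ∈ T.erase l₁, (X - C μ : F[X]).natDegree = 1 :=
          fun μ _ => Polynomial.natDegree_X_sub_C μ
        rw [Finset.sum_congr rfl h3, Finset.sum_const, smul_eq_mul, mul_one,
          Finset.card_erase_of_mem hl1, hcardT]
      omega
    have heig1 : A *ᵥ ((aeval A p₁) *ᵥ v) = l₁ • ((aeval A p₁) *ᵥ v) := by
      have h1 : (X : F[X]) * p₁ = C l₁ * p₁ + c := by rw [← hp₁c]; ring
      calc A *ᵥ ((aeval A p₁) *ᵥ v) = (aeval A (X * p₁)) *ᵥ v := by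
            rw [Matrix.mulVec_mulVec, _root_.map_mul, Polynomial.aeval_X]
        _ = (aeval A (C l₁ * p₁ + c)) *ᵥ v := by rw [h1]
        _ = l₁ • ((aeval A p₁) *ᵥ v) := by
            rw [_root_.map_add, _root_.map_mul, Polynomial.aeval_C, hc,
              Matrix.aeval_self_charpoly, add_zero, ← Algebra.smul_def,
              Matrix.smul_mulVec]
    have heig2 : A *ᵥ ((G : Matrix (Fin n) (Fin n) F) *ᵥ ((aeval A p₁) *ᵥ v))
        = l₂ • ((G : Matrix (Fin n) (Fin n) F) *ᵥ ((aeval A p₁) *ᵥ v)) := by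
      rw [hG2 p₁]
      have hdvd2 : c ∣ X * (p₁.comp u) - C l₂ * (p₁.comp u) := by
        apply hdvd_of_roots
        intro μ hμ
        rw [Polynomial.eval_sub, Polynomial.eval_mul, Polynomial.eval_mul, Polynomial.eval_X,
          Polynomial.eval_C, Polynomial.eval_comp, hueval μ hμ]
        rcases eq_or_ne μ l₂ with h | h
        · subst h; ring
        · have h7 : σ μ ∈ T.erase l₁ := by
            rw [Finset.mem_erase]
            refine ⟨?_, hσT μ hμ⟩
            intro hbad
            apply h
            have h8 := congrArg σ hbad
            rw [hσσ, hσl₁] at h8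
            exact h8
          have h8 : p₁.eval (σ μ) = 0 := by
            rw [hp₁, Polynomial.eval_prod]
            apply Finset.prod_eq_zero h7
            simp
          rw [h8]
          ring
      have h9 : (aeval A (X * (p₁.comp u))) *ᵥ v = (aeval A (C l₂ * (p₁.comp u))) *ᵥ v := by
        have h10 := (hv _).2 hdvd2
        rw [map_sub, Matrix.sub_mulVec] at h10
        exact sub_eq_zero.1 h10
      calc A *ᵥ ((aeval A (p₁.comp u)) *ᵥ v) = (aeval A (X * (p₁.comp u))) *ᵥ v := by
            rw [Matrix.mulVec_mulVec, _root_.map_mul, Polynomial.aeval_X]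
        _ = (aeval A (C l₂ * (p₁.comp u))) *ᵥ v := h9
        _ = l₂ • ((aeval A (p₁.comp u)) *ᵥ v) := by
            rw [_root_.map_mul, Polynomial.aeval_C, ← Algebra.smul_def, Matrix.smul_mulVec]
    have hGne : (G : Matrix (Fin n) (Fin n) F) *ᵥ ((aeval A p₁) *ᵥ v) ≠ 0 := by
      intro h0
      apply hΦp₁ne
      have h1 : ((G⁻¹ : (Matrix (Fin n) (Fin n) F)ˣ) : Matrix (Fin n) (Fin n) F)
          *ᵥ ((G : Matrix (Fin n) (Fin n) F) *ᵥ ((aeval A p₁) *ᵥ v)) = 0 := by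
        rw [h0, Matrix.mulVec_zero]
      rw [Matrix.mulVec_mulVec, ← Units.val_mul, inv_mul_cancel G, Units.val_one,
        Matrix.one_mulVec] at h1
      exact h1
    have hncomm : ¬ (G * s = s * G) := by
      intro hcm
      have hval : (G : Matrix (Fin n) (Fin n) F) * A = A * (G : Matrix (Fin n) (Fin n) F) := by
        have h1 := congrArg Units.val hcm
        rw [Units.val_mul, Units.val_mul] at h1
        exact h1
      have h1 : A *ᵥ ((G : Matrix (Fin n) (Fin n) F) *ᵥ ((aeval A p₁) *ᵥ v))
          = l₁ • ((G : Matrix (Fin n) (Fin n) F) *ᵥ ((aeval A p₁) *ᵥ v)) := by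
        rw [Matrix.mulVec_mulVec, ← hval, ← Matrix.mulVec_mulVec, heig1, Matrix.mulVec_smul]
      rw [heig2] at h1
      have h2 : (l₂ - l₁) • ((G : Matrix (Fin n) (Fin n) F) *ᵥ ((aeval A p₁) *ᵥ v)) = 0 := by
        rw [sub_smul, h1, sub_self]
      rcases smul_eq_zero.1 h2 with h | h
      · exact hne (sub_eq_zero.1 h).symm
      · exact hGne h
    rw [heq] at hmem
    exact hncomm (Subgroup.mem_centralizer_singleton_iff.1 hmem)
  · -- Frobenius case
    have hpq : ¬ (orderOf s) ∣ q := by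
      intro hdvd
      set p' := ringChar F with hp'
      obtain ⟨k, hk_prime, hcard⟩ := FiniteField.card F p'
      have hpp' : orderOf s = p' := by
        have h1 : (orderOf s) ∣ p' ^ (k : ℕ) := by rw [← hcard]; exact hdvd
        have h2 : (orderOf s) ∣ p' := hprime.dvd_of_dvd_pow h1
        exact (Nat.prime_dvd_prime_iff_eq hprime hk_prime).1 h2
      haveI : Fact (Nat.Prime p') := ⟨hk_prime⟩
      haveI : CharP (Matrix (Fin n) (Fin n) F) p' := Matrix.charP p'
      have hApow : A ^ (orderOf s) = 1 := by
        have h3 := pow_orderOf_eq_one s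
        have h4 := congrArg Units.val h3
        rw [Units.val_pow_eq_pow_val, Units.val_one] at h4
        exact h4
      have hsub : (A - 1) ^ p' = 0 := by
        rw [sub_pow_char_of_commute _ (Commute.one_right A), ← hpp', hApow, one_pow, sub_self]
      have hdv : c ∣ (X - C 1) ^ p' := by
        rw [hmin]
        apply minpoly.dvd
        rw [map_pow, map_sub, Polynomial.aeval_X, Polynomial.aeval_C, _root_.map_one]
        exact hsub
      obtain ⟨i, hip, hassoc⟩ := (dvd_prime_pow (Polynomial.prime_X_sub_C (1 : F)) p').1 hdv
      have hdeg2 : n = i := by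
        have hd1 : c ∣ (X - C 1 : F[X]) ^ i := hassoc.dvd
        have hd2 : (X - C 1 : F[X]) ^ i ∣ c := hassoc.symm.dvd
        have hne1 : ((X - C 1 : F[X])) ^ i ≠ 0 := pow_ne_zero _ (Polynomial.X_sub_C_ne_zero 1)
        have h1 := Polynomial.natDegree_le_of_dvd hd1 hne1
        have h2 := Polynomial.natDegree_le_of_dvd hd2 hc0
        rw [Polynomial.natDegree_pow, Polynomial.natDegree_X_sub_C, mul_one, hdeg] at h1 h2
        omega
      have hsq2 : (X - C 1 : F[X]) * (X - C 1) ∣ c := by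
        have h3 : ((X - C 1 : F[X])) ^ 2 ∣ (X - C 1 : F[X]) ^ i := pow_dvd_pow _ (by omega)
        have h4 : (X - C 1 : F[X]) * (X - C 1) = (X - C 1 : F[X]) ^ 2 := (sq _).symm
        rw [h4]
        exact dvd_trans h3 hassoc.symm.dvd
      exact Polynomial.not_isUnit_X_sub_C 1 (hsq _ hsq2)
    have hcop : Nat.Coprime q (orderOf s) := ((hprime.coprime_iff_not_dvd).2 hpq).symm
    obtain ⟨e, -, he⟩ := Nat.exists_mul_mod_eq_one_of_coprime hcop hprime.one_lt
    have hqe : s ^ (q * e) = s := by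
      have h1 : q * e ≡ 1 [MOD orderOf s] := by
        unfold Nat.ModEq
        rw [he, Nat.mod_eq_of_lt hprime.one_lt]
      calc s ^ (q * e) = s ^ 1 := (pow_eq_pow_iff_modEq).2 h1
        _ = s := pow_one s
    have hAqe : A ^ (q * e) = A := by
      have h1 := congrArg Units.val hqe
      rw [Units.val_pow_eq_pow_val] at h1
      exact h1
    have hcw : c ∣ c.comp ((X : F[X]) ^ q) := by
      have h1 : c.comp ((X : F[X]) ^ q) = Polynomial.expand F q c := rfl
      rw [h1, FiniteField.expand_card]
      exact dvd_pow_self c (by omega)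
    have hw' : c ∣ ((X : F[X]) ^ e).comp ((X : F[X]) ^ q) - X := by
      have h1 : ((X : F[X]) ^ e).comp ((X : F[X]) ^ q) = X ^ (q * e) := by
        rw [Polynomial.X_pow_comp, ← pow_mul]
      rw [h1, hmin]
      apply minpoly.dvd
      rw [map_sub, map_pow, Polynomial.aeval_X]
      rw [hAqe, sub_self]
    obtain ⟨G, hG1, _⟩ := RSSAux.exists_conjugator hn0 A v hv ((X : F[X]) ^ q) ((X : F[X]) ^ e)
      hcw hw'
    have hG1' : (G : Matrix (Fin n) (Fin n) F) * A = A ^ q * (G : Matrix (Fin n) (Fin n) F) := by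
      rw [hG1, map_pow, Polynomial.aeval_X]
    have hpowG : ∀ k : ℕ, (G : Matrix (Fin n) (Fin n) F) * A ^ k
        = (A ^ q) ^ k * (G : Matrix (Fin n) (Fin n) F) := by
      intro k
      induction k with
      | zero => simp
      | succ k ih =>
          rw [pow_succ, ← Matrix.mul_assoc, ih, Matrix.mul_assoc, hG1', pow_succ,
            Matrix.mul_assoc]
    have hA2 : A * (G : Matrix (Fin n) (Fin n) F)
        = (G : Matrix (Fin n) (Fin n) F) * A ^ e := by
      have h3 := hpowG e
      rw [← pow_mul, hAqe] at h3
      exact h3.symm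
    have hmem := RSSAux.mem_normalizer_of_conj s G ((X : F[X]) ^ q) ((X : F[X]) ^ e)
      (by rw [map_pow, Polynomial.aeval_X]; exact hG1')
      (by rw [map_pow, Polynomial.aeval_X]; exact hA2)
    have hncomm : ¬ (G * s = s * G) := by
      intro hcm
      have hval : (G : Matrix (Fin n) (Fin n) F) * A = A * (G : Matrix (Fin n) (Fin n) F) := by
        have h1 := congrArg Units.val hcm
        rw [Units.val_mul, Units.val_mul] at h1
        exact h1
      apply hsplit
      have h1 : A ^ q * (G : Matrix (Fin n) (Fin n) F) = A * (G : Matrix (Fin n) (Fin n) F) := by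
        rw [← hG1', hval]
      have h2 := congrArg
        (fun M => M * ((G⁻¹ : (Matrix (Fin n) (Fin n) F)ˣ) : Matrix (Fin n) (Fin n) F)) h1
      simp only [Matrix.mul_assoc] at h2
      rw [← Units.val_mul, mul_inv_cancel G, Units.val_one, mul_one, mul_one] at h2
      exact h2
    rw [heq] at hmem
    exact hncomm (Subgroup.mem_centralizer_singleton_iff.1 hmem)
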